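/- Let H be a connected finite graph of maximum degree at most Δ, where Δ ≥ 2, and fix a vertex subset C ⊆ V(H). Then for every integer a with 1 ≤ a ≤ |C|, there exist a vertex y ∈ V(H) and a subset I ⊆ ℕ such that the number of vertices v ∈ C with dist_H(y,v) ∈ I is at least a and strictly less than a·Δ. -/

import Mathlib

open MeasureTheory Filter

/-- Product of (independent) Bernoulli distributions on `ι → Bool`, with
success probability `q i` in coordinate `i`. -/
noncomputable def bernoulliProduct (ι : Type*) [Fintype ι] [DecidableEq ι] (q : ι → ℝ) :
    Measure (ι → Bool) :=
  ∑ f : ι → Bool,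
    (∏ i : ι, if f i then ENNReal.ofReal (q i) else ENNReal.ofReal (1 - q i)) •
      Measure.dirac f

/-- The Erdős–Rényi measure: each (potential) edge of the complete graph on `Fin n`
is present independently with probability `p`; encoded as a random `Sym2 (Fin n) → Bool`. -/
noncomputable def erdosRenyiMeasure (n : ℕ) (p : ℝ) : Measure (Sym2 (Fin n) → Bool) :=
  bernoulliProduct (Sym2 (Fin n)) fun _ => p

/-- The graph on `Fin n` determined by an edge-indicator function. -/
def graphOfFlip {n : ℕ} (f : Sym2 (Fin n) → Bool) : SimpleGraph (Fin n) :=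
  SimpleGraph.fromRel fun u v => f s(u, v) = true

/-- Symmetric difference of two graphs on the same vertex set. -/
def symmDiffG {V : Type*} (G₁ G₂ : SimpleGraph V) : SimpleGraph V :=
  SimpleGraph.fromRel fun u v => Xor' (G₁.Adj u v) (G₂.Adj u v)

/-- `crEquiv G c t u v` : vertices `u` and `v` get the same colour after `t` rounds of
colour refinement on `G`, starting from the colouring `c`. -/
def crEquiv {V : Type*} {Ω : Type*} (G : SimpleGraph V) (c : V → Ω) : ℕ → V → V → Prop
  | 0, u, v => c u = c v
  | (t + 1), u, v => crEquiv G c t u v ∧ ∀ w : V,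
      Nat.card {x : V // G.Adj u x ∧ crEquiv G c t x w} =
      Nat.card {x : V // G.Adj v x ∧ crEquiv G c t x w}

/-- `u` and `v` get the same colour in the stable colouring `R* c`. -/
def crStable {V : Type*} {Ω : Type*} (G : SimpleGraph V) (c : V → Ω) (u v : V) : Prop :=
  ∀ t, crEquiv G c t u v

/-- `u` and `v` get the same colour in the stable colouring `R* σ`
(colour refinement started from the trivial colouring). -/
def crStableTrivial {V : Type*} (G : SimpleGraph V) (u v : V) : Prop :=
  crStable G (fun _ => (0 : ℕ)) u v

/-- Equality of the initial pair-colourings `φ_{G,c}` on two ordered pairs of vertices. -/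
def wl2Init {V : Type*} {Ω : Type*} (G : SimpleGraph V) (c : V → Ω) (p q : V × V) : Prop :=
  (G.Adj p.1 p.2 ↔ G.Adj q.1 q.2) ∧ (p.1 = p.2 ↔ q.1 = q.2) ∧
    (p.1 = p.2 → q.1 = q.2 → c p.2 = c q.2)

/-- `wl2Equiv G c t p q` : the ordered pairs `p` and `q` get the same colour after `t` rounds of
the 2-dimensional Weisfeiler–Leman refinement on `G`, started from `φ_{G,c}`. -/
def wl2Equiv {V : Type*} {Ω : Type*} (G : SimpleGraph V) (c : V → Ω) :
    ℕ → V × V → V × V → Prop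
  | 0, p, q => wl2Init G c p q
  | (t + 1), p, q => wl2Equiv G c t p q ∧ ∀ r s : V × V,
      Nat.card {w : V // wl2Equiv G c t (p.1, w) r ∧ wl2Equiv G c t (w, p.2) s} =
      Nat.card {w : V // wl2Equiv G c t (q.1, w) r ∧ wl2Equiv G c t (w, q.2) s}

/-- `u` and `v` get the same colour in the vertex colouring `V* c` obtained from the stable
pair colouring of the 2-dimensional Weisfeiler–Leman algorithm started from `φ_{G,c}`. -/
def wl2VertexEquiv {V : Type*} {Ω : Type*} (G : SimpleGraph V) (c : V → Ω) (u v : V) : Prop :=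
  ∀ t, wl2Equiv G c t (u, u) (v, v)

/-- Given a colouring of `V(H)` encoded as the equivalence relation `r` ("has the same colour"),
`majority H r u v` says that at least half of the possible edges between the colour class of `u`
and the colour class of `v` are present in `H` (counting ordered pairs). -/
def majority {V : Type*} (H : SimpleGraph V) (r : V → V → Prop) (u v : V) : Prop :=
  Nat.card {p : V × V // p.1 ≠ p.2 ∧ r p.1 u ∧ r p.2 v} ≤
    2 * Nat.card {p : V × V // p.1 ≠ p.2 ∧ r p.1 u ∧ r p.2 v ∧ H.Adj p.1 p.2}

/-- The disparity graph `D(H,c)`, for the colouring encoded by the relation `r`. -/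
def disparity {V : Type*} (H : SimpleGraph V) (r : V → V → Prop) : SimpleGraph V :=
  SimpleGraph.fromRel fun u v => Xor' (H.Adj u v) (majority H r u v)

/-- The generalised disparity graph `D_L(H,c)` for a 0-1 matrix `L` on colours. -/
def gDisparity {V : Type*} {Ω : Type*} (H : SimpleGraph V) (c : V → Ω) (L : Ω → Ω → Bool) :
    SimpleGraph V :=
  SimpleGraph.fromRel fun u v => Xor' (H.Adj u v) (L (c u) (c v) = true)

/-- The vertex set of the connected component of `v` in `G`. -/
def compSet {V : Type*} (G : SimpleGraph V) (v : V) : Set V := {u | G.Reachable v u}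

/-- A colouring is equitable if any two vertices with the same colour have the same number of
neighbours in every colour class. -/
def IsEquitable {V : Type*} {Ω : Type*} (H : SimpleGraph V) (c : V → Ω) : Prop :=
  ∀ u v, c u = c v → ∀ a : Ω,
    Nat.card {x : V // H.Adj u x ∧ c x = a} = Nat.card {x : V // H.Adj v x ∧ c x = a}

/-- Vertex set of the `k`-core of `G`: the union of all vertex sets inducing minimum
degree at least `k`. -/
def kCore {V : Type*} (G : SimpleGraph V) (k : ℕ) : Set V :=
  ⋃₀ {S : Set V | ∀ v ∈ S, k ≤ Nat.card {u : V // u ∈ S ∧ G.Adj v u}}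

/-- `V_{2,3}(G)`: vertices of the 2-core of `G` having degree at least 3 in the 2-core. -/
def V23 {V : Type*} (G : SimpleGraph V) : Set V :=
  {v | v ∈ kCore G 2 ∧ 3 ≤ Nat.card {u : V // u ∈ kCore G 2 ∧ G.Adj v u}}

/-- The graph obtained from `G` by deleting all edges meeting `T`
(so that reachability in `avoidG G T` from `v ∉ T` is reachability in `G - T`). -/
def avoidG {V : Type*} (G : SimpleGraph V) (T : Set V) : SimpleGraph V :=
  SimpleGraph.fromRel fun u v => G.Adj u v ∧ u ∉ T ∧ v ∉ T

/-- `V_{2,3}^{safe}(G)`: vertices `v ∈ V_{2,3}(G)` such that after deleting any set of at most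
two other vertices, the component of `v` still contains at least 3 vertices of `V_{2,3}(G)`. -/
def V23safe {V : Type*} (G : SimpleGraph V) : Set V :=
  {v | v ∈ V23 G ∧ ∀ T : Finset V, T.card ≤ 2 → v ∉ T →
    3 ≤ Nat.card {w : V // w ∈ V23 G ∧ (avoidG G (T : Set V)).Reachable v w}}

open Classical in
/-- `Lmul G i u v w` is the multiplicity of the vertex `w` in the multiset `L^i_G(u,v)`. -/
noncomputable def Lmul {V : Type*} [Fintype V] (G : SimpleGraph V) : ℕ → V → V → V → ℕ
  | 0, u, _, w => if w = u then 1 else 0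
  | (i + 1), u, v, w =>
      (∑ x : V, if G.Adj w x then Lmul G i u v x else 0) -
        (∑ x : V, if G.Adj w x then Lmul G i v u x else 0)

/-- Union over `j < i` of the supports of `L^j_G(u,v)` and `L^j_G(v,u)`. -/
noncomputable def Sbelow {V : Type*} [Fintype V] (G : SimpleGraph V) (u v : V) (i : ℕ) :
    Set V :=
  {w | ∃ j < i, 0 < Lmul G j u v w ∨ 0 < Lmul G j v u w}

/-- `S^{≤ i}_G({u,v})`. -/
noncomputable def Sle {V : Type*} [Fintype V] (G : SimpleGraph V) (u v : V) (i : ℕ) : Set V :=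
  Sbelow G u v (i + 1)

/-- `S^{i}_G({u,v}) = S^{≤ i}_G({u,v}) \ S^{≤ i-1}_G({u,v})`. -/
noncomputable def Sat {V : Type*} [Fintype V] (G : SimpleGraph V) (u v : V) (i : ℕ) : Set V :=
  Sbelow G u v (i + 1) \ Sbelow G u v i

/-- Degree of a vertex (as `Nat.card` of the neighbour set, avoiding decidability issues). -/
noncomputable def ncDegree {V : Type*} (G : SimpleGraph V) (v : V) : ℕ :=
  Nat.card {u : V // G.Adj v u}

/-- The random refinement of a colouring `c`: each vertex `v` with `f v = true` receives
a brand-new colour unique to itself. -/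
def refineColor {V : Type*} {Ω : Type*} (c : V → Ω) (f : V → Bool) : V → Ω ⊕ V :=
  fun v => if f v then Sum.inr v else Sum.inl (c v)

/-- `D(H,c)` (for the colouring encoded by the relation `r`) is `s`-bounded: every
intersection of a colour class with a connected component of `D(H,c)` has at most
`s` elements. -/
def sBounded {V : Type*} (H : SimpleGraph V) (r : V → V → Prop) (s : ℕ) : Prop :=
  ∀ u v : V, Nat.card {w : V // r w u ∧ w ∈ compSet (disparity H r) v} ≤ s

/-- The type of canonical colours after `t` rounds of colour refinement. -/
def CCol : ℕ → Type
  | 0 => Unit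
  | (t + 1) => CCol t × Multiset (CCol t)

open Classical in
/-- The canonical colour of a vertex after `t` rounds of colour refinement. -/
noncomputable def canonColor {V : Type*} [Fintype V] (G : SimpleGraph V) :
    (t : ℕ) → V → CCol t
  | 0, _ => ()
  | (t + 1), v =>
      (canonColor G t v, (Finset.univ.filter fun w => G.Adj v w).val.map (canonColor G t))

/-- The modal probability `M(m,p)` of a `Binomial(m,p)` random variable. -/
noncomputable def modalProb (m : ℕ) (p : ℝ) : ℝ :=
  (m.choose ⌊(m + 1 : ℝ) * p⌋₊ : ℝ) * p ^ ⌊(m + 1 : ℝ) * p⌋₊ *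
    (1 - p) ^ (m - ⌊(m + 1 : ℝ) * p⌋₊)


/-- Lemma 5.4.
In a connected finite graph of maximum degree at most `Δ ≥ 2`, for every vertex subset `C`
and every `1 ≤ a ≤ |C|` there are a vertex `y` and a set `I ⊆ ℕ` such that the number of
vertices of `C` at distance (from `y`) in `I` lies in `[a, a·Δ)`. -/
theorem stmt12 {V : Type*} [Fintype V] (H : SimpleGraph V) (hconn : H.Connected)
    (Δ : ℕ) (hΔ : 2 ≤ Δ) (hdeg : ∀ v : V, ncDegree H v ≤ Δ)
    (C : Set V) (a : ℕ) (ha : 1 ≤ a) (haC : a ≤ Nat.card ↥C) :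
    ∃ (y : V) (I : Set ℕ),
      a ≤ Nat.card {w : V // w ∈ C ∧ H.dist y w ∈ I} ∧
      Nat.card {w : V // w ∈ C ∧ H.dist y w ∈ I} < a * Δ := by
  classical
  have hΔpos : 0 < Δ := by omega
  set cnt : V → Set ℕ → ℕ := fun y I =>
    (Finset.univ.filter (fun w => w ∈ C ∧ H.dist y w ∈ I)).card with hcnt
  have cardEq : ∀ (y : V) (I : Set ℕ),
      Nat.card {w : V // w ∈ C ∧ H.dist y w ∈ I} = cnt y I := by
    intro y I
    rw [Nat.card_eq_fintype_card, Fintype.card_subtype]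
  have hCne : Nonempty ↥C := by
    have h0 : 0 < Nat.card ↥C := lt_of_lt_of_le ha haC
    exact (Nat.card_pos_iff.mp h0).1
  obtain ⟨⟨y₀, hy₀⟩⟩ := hCne
  have hCcard : a ≤ (Finset.univ.filter (fun w => w ∈ C)).card := by
    rwa [← Fintype.card_subtype, ← Nat.card_eq_fintype_card]
  -- the cumulative count reaches a
  have hex : ∃ k, a ≤ cnt y₀ {j | j < k} := by
    refine ⟨(Finset.univ.sup fun w => H.dist y₀ w) + 1, le_trans hCcard
      (Finset.card_le_card ?_)⟩
    intro w hw
    simp only [Finset.mem_filter, Finset.mem_univ, true_and, Set.mem_setOf_eq] at hw ⊢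
    exact ⟨hw, Nat.lt_succ_of_le (Finset.le_sup (Finset.mem_univ w))⟩
  set k := Nat.find hex with hkdef
  have hka : a ≤ cnt y₀ {j | j < k} := Nat.find_spec hex
  have hkmin : ∀ m, m < k → cnt y₀ {j | j < m} < a := fun m hm =>
    lt_of_not_ge (Nat.find_min hex hm)
  -- a key product inequality
  have h2a : 2 * a ≤ a * Δ := by
    calc 2 * a = a * 2 := by ring
    _ ≤ a * Δ := Nat.mul_le_mul_left a hΔ
  by_cases hcase : cnt y₀ {j | j < k} < a * Δ
  · exact ⟨y₀, {j | j < k}, by rw [cardEq]; exact hka, by rw [cardEq]; exact hcase⟩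
  push_neg at hcase
  -- so a sphere around y₀ is heavy
  have hk1 : 1 ≤ k := by
    by_contra h
    have hk0 : k = 0 := by omega
    rw [hk0] at hka
    have : cnt y₀ {j | j < 0} = 0 := by
      simp [hcnt]
    omega
  have hsplit : cnt y₀ {j | j < k} ≤ cnt y₀ {j | j < k - 1} + cnt y₀ ({k - 1} : Set ℕ) := by
    simp only [hcnt]
    refine le_trans (Finset.card_le_card ?_) (Finset.card_union_le _ _)
    intro w hw
    simp only [Finset.mem_filter, Finset.mem_univ, true_and, Finset.mem_union,
      Set.mem_setOf_eq, Set.mem_singleton_iff] at hw ⊢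
    obtain ⟨hwC, hwd⟩ := hw
    rcases lt_or_ge (H.dist y₀ w) (k - 1) with h | h
    · exact Or.inl ⟨hwC, h⟩
    · exact Or.inr ⟨hwC, by omega⟩
  have heavy : a ≤ cnt y₀ ({k - 1} : Set ℕ) := by
    have h1 := hkmin (k - 1) (by omega)
    omega
  -- minimal heavy sphere
  have hex2 : ∃ d, ∃ y : V, a ≤ cnt y ({d} : Set ℕ) := ⟨k - 1, y₀, heavy⟩
  set d := Nat.find hex2 with hddef
  obtain ⟨y, hy⟩ := Nat.find_spec hex2
  by_cases hc2 : cnt y ({d} : Set ℕ) < a * Δ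
  · exact ⟨y, {d}, by rw [cardEq]; exact hy, by rw [cardEq]; exact hc2⟩
  push_neg at hc2
  exfalso
  have hd1 : 1 ≤ d := by
    by_contra h
    have hd0 : d = 0 := by omega
    have hle1 : cnt y ({d} : Set ℕ) ≤ 1 := by
      simp only [hcnt]
      refine le_trans (Finset.card_le_card (?_ : _ ⊆ ({y} : Finset V))) (by simp)
      intro w hw
      simp only [Finset.mem_filter, Finset.mem_univ, true_and,
        Set.mem_singleton_iff, hd0] at hw
      have : y = w := hconn.dist_eq_zero_iff.mp hw.2
      simp [this]
    omega
  -- pigeonhole over neighbours of y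
  set A := Finset.univ.filter (fun w => w ∈ C ∧ H.dist y w = d) with hA
  have hAcnt : cnt y ({d} : Set ℕ) = A.card := by
    simp only [hcnt, hA, Set.mem_singleton_iff]
  have hAcard : a * Δ ≤ A.card := hAcnt ▸ hc2
  have hstep : ∀ w ∈ A, ∃ x, H.Adj y x ∧ H.dist x w = d - 1 := by
    intro w hw
    simp only [hA, Finset.mem_filter, Finset.mem_univ, true_and] at hw
    obtain ⟨hwC, hdw⟩ := hw
    obtain ⟨p, hp⟩ := (hconn y w).exists_walk_length_eq_dist
    rw [hdw] at hp
    cases p with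
    | nil => simp at hp; omega
    | @cons _ x _ hadj q =>
      refine ⟨x, hadj, ?_⟩
      have hlen : q.length = d - 1 := by
        simp only [SimpleGraph.Walk.length_cons] at hp; omega
      have h1 : H.dist x w ≤ d - 1 := hlen ▸ SimpleGraph.dist_le q
      have hyx : H.dist y x ≤ 1 := by
        have := SimpleGraph.dist_le (SimpleGraph.Walk.cons hadj SimpleGraph.Walk.nil)
        simpa using this
      have h2 : d ≤ H.dist y x + H.dist x w := by
        rw [← hdw]; exact hconn.dist_triangle
      omega
  choose! f hf1 hf2 using hstep
  set Nb := Finset.univ.filter (fun x => H.Adj y x) with hNb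
  have hNbΔ : Nb.card ≤ Δ := by
    have h := hdeg y
    rwa [ncDegree, Nat.card_eq_fintype_card, Fintype.card_subtype] at h
  have hfib : A.card = ∑ x ∈ Nb, (A.filter (fun w => f w = x)).card :=
    Finset.card_eq_sum_card_fiberwise (fun w hw => by
      simp only [hNb, Finset.mem_coe, Finset.mem_filter, Finset.mem_univ, true_and]
      exact hf1 w hw)
  have hbig : ∃ x ∈ Nb, a ≤ (A.filter (fun w => f w = x)).card := by
    by_contra hcon
    push_neg at hcon
    have hsum : A.card ≤ Nb.card * (a - 1) := by
      rw [hfib]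
      calc ∑ x ∈ Nb, (A.filter (fun w => f w = x)).card
          ≤ ∑ _x ∈ Nb, (a - 1) := Finset.sum_le_sum (fun x hx => by
            have := hcon x hx; omega)
        _ = Nb.card * (a - 1) := by rw [Finset.sum_const, smul_eq_mul]
    have h1 : Nb.card * (a - 1) ≤ Δ * (a - 1) := Nat.mul_le_mul_right _ hNbΔ
    have h2 : Δ * (a - 1) < a * Δ := by
      calc Δ * (a - 1) < Δ * (a - 1) + Δ := by omega
        _ = Δ * (a - 1 + 1) := (Nat.mul_succ _ _).symm
        _ = Δ * a := by rw [Nat.sub_add_cancel ha]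
        _ = a * Δ := Nat.mul_comm _ _
    omega
  obtain ⟨x, hxNb, hxa⟩ := hbig
  have hfinal : a ≤ cnt x ({d - 1} : Set ℕ) := by
    simp only [hcnt]
    refine le_trans hxa (Finset.card_le_card ?_)
    intro w hw
    have hwA : w ∈ A := (Finset.mem_filter.mp hw).1
    have hfw : f w = x := (Finset.mem_filter.mp hw).2
    have hwC : w ∈ C := ((Finset.mem_filter.mp hwA).2).1
    simp only [Finset.mem_filter, Finset.mem_univ, true_and, Set.mem_singleton_iff]
    exact ⟨hwC, by rw [← hfw]; exact hf2 w hwA⟩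
  exact Nat.find_min hex2 (show d - 1 < d by omega) ⟨x, hfinal⟩
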